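/- Let e₁ be the first standard basis vector of EuclideanSpace ℝ (Fin 3) and let v be any fixed point of ℝ³. Then as r → ∞, the inversion in the sphere of radius r centered at r·e₁ applied to v tends to the reflection of v in the plane x = 0; that is, Tendsto (fun r => EuclideanGeometry.inversion (r • e₁) r v) atTop (𝓝 (v − 2⟨v, e₁⟩ • e₁)). For v = (x,y,z) the limit is (−x, y, z). -/

import Mathlib

open Filter EuclideanGeometry

/-- As `r → ∞`, inversion in the sphere of radius `r` centered at
`r • e₁` (where `e₁` is the first standard basis vector of `ℝ³`) applied to a fixed
point `v` tends to the reflection of `v` in the plane `x = 0`. -/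
theorem inversion_tendsto_reflection (v : EuclideanSpace ℝ (Fin 3)) :
    Tendsto
      (fun r : ℝ =>
        EuclideanGeometry.inversion
          (r • EuclideanSpace.single (0 : Fin 3) (1 : ℝ)) r v)
      atTop
      (nhds (v - (2 * inner ℝ v (EuclideanSpace.single (0 : Fin 3) (1 : ℝ)) : ℝ) •
        EuclideanSpace.single (0 : Fin 3) (1 : ℝ))) := by
  set e : EuclideanSpace ℝ (Fin 3) := EuclideanSpace.single (0 : Fin 3) (1 : ℝ) with he
  set a : ℝ := inner ℝ v e with ha
  set b : ℝ := ‖v‖ ^ 2 with hb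
  have hne : ‖e‖ = 1 := by
    rw [he, EuclideanSpace.norm_single]; simp
  have habs : |a| ≤ ‖v‖ := by
    calc |a| = |(inner ℝ v e : ℝ)| := rfl
    _ ≤ ‖v‖ * ‖e‖ := abs_real_inner_le_norm v e
    _ = ‖v‖ := by rw [hne, mul_one]
  have hQ : ∀ r : ℝ, dist v (r • e) ^ 2 = r ^ 2 - 2 * r * a + b := by
    intro r
    rw [dist_eq_norm, @norm_sub_sq_real, real_inner_smul_right, norm_smul, hne]
    simp [hb, ha]
    ring
  have hQpos : ∀ r : ℝ, ‖v‖ < r → 0 < r ^ 2 - 2 * r * a + b := by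
    intro r hr
    have h1 : a ≤ ‖v‖ := le_trans (le_abs_self a) habs
    have h2 : a ^ 2 ≤ b := by
      rw [hb, ← sq_abs a]
      exact pow_le_pow_left₀ (abs_nonneg a) habs 2
    nlinarith [sq_nonneg (r - a)]
  -- the two scalar coefficient functions
  have h1 : Tendsto (fun r : ℝ => r ^ 2 / (r ^ 2 - 2 * r * a + b)) atTop (nhds 1) := by
    have key : Tendsto (fun r : ℝ => 1 - 2 * a / r + b / r ^ 2) atTop (nhds 1) := by
      have := ((tendsto_const_nhds (x := (2 * a)) (f := atTop)).div_atTop tendsto_id)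
      have h2 := ((tendsto_const_nhds (x := b) (f := atTop)).div_atTop
        (tendsto_pow_atTop (n := 2) (by norm_num)))
      have := ((tendsto_const_nhds (x := (1 : ℝ)) (f := atTop)).sub this).add h2
      simpa using this
    have key2 := key.inv₀ (by norm_num)
    rw [inv_one] at key2
    refine key2.congr' ?_
    filter_upwards [eventually_gt_atTop (‖v‖ ⊔ 0)] with r hr
    have hr0 : 0 < r := lt_of_le_of_lt le_sup_right hr
    have hQ' := hQpos r (lt_of_le_of_lt le_sup_left hr)
    have hden : 1 - 2 * a / r + b / r ^ 2 = (r ^ 2 - 2 * r * a + b) / r ^ 2 := by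
      field_simp
    rw [hden, inv_div]
  have h2 : Tendsto (fun r : ℝ => r * (b - 2 * r * a) / (r ^ 2 - 2 * r * a + b))
      atTop (nhds (-(2 * a))) := by
    have key : Tendsto (fun r : ℝ => (b / r - 2 * a) / (1 - 2 * a / r + b / r ^ 2))
        atTop (nhds (-(2 * a))) := by
      have hb' := ((tendsto_const_nhds (x := b) (f := atTop)).div_atTop tendsto_id)
      have ha' := ((tendsto_const_nhds (x := (2 * a)) (f := atTop)).div_atTop tendsto_id)
      have hb2 := ((tendsto_const_nhds (x := b) (f := atTop)).div_atTop
        (tendsto_pow_atTop (n := 2) (by norm_num)))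
      have hden := (((tendsto_const_nhds (x := (1 : ℝ)) (f := atTop)).sub ha').add hb2)
      have hnum := hb'.sub (tendsto_const_nhds (x := (2 * a)) (f := atTop))
      have := hnum.div (by simpa using hden) (by norm_num)
      simpa [Pi.div_def] using this
    refine key.congr' ?_
    filter_upwards [eventually_gt_atTop (‖v‖ ⊔ 0)] with r hr
    have hr0 : 0 < r := lt_of_le_of_lt le_sup_right hr
    have hQ' := hQpos r (lt_of_le_of_lt le_sup_left hr)
    have hden : 1 - 2 * a / r + b / r ^ 2 = (r ^ 2 - 2 * r * a + b) / r ^ 2 := by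
      field_simp
    rw [hden, div_div_eq_mul_div]
    rw [div_eq_div_iff hQ'.ne' hQ'.ne']
    field_simp
  have main : Tendsto (fun r : ℝ =>
      (r ^ 2 / (r ^ 2 - 2 * r * a + b)) • v +
        (r * (b - 2 * r * a) / (r ^ 2 - 2 * r * a + b)) • e) atTop
      (nhds ((1 : ℝ) • v + (-(2 * a)) • e)) :=
    (h1.smul_const v).add (h2.smul_const e)
  have hfinal : v - (2 * a) • e = (1 : ℝ) • v + (-(2 * a)) • e := by module
  rw [ha, he] at hfinal
  rw [hfinal]
  refine main.congr' ?_
  filter_upwards [eventually_gt_atTop (‖v‖ ⊔ 0)] with r hr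
  have hr0 : 0 < r := lt_of_le_of_lt le_sup_right hr
  have hrv : ‖v‖ < r := lt_of_le_of_lt le_sup_left hr
  have hQ' := hQpos r hrv
  have hdpos : (0 : ℝ) < dist v (r • e) ^ 2 := by rw [hQ r]; exact hQ'
  have hdne : dist v (r • e) ≠ 0 := by
    intro h; rw [h] at hdpos; norm_num at hdpos
  simp only [EuclideanGeometry.inversion, vsub_eq_sub, vadd_eq_add]
  rw [div_pow, hQ r, smul_sub, smul_smul]
  match_scalars
  · field_simp
  · have hD : b - r * a * 2 + r ^ 2 ≠ 0 := by intro h; linarith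
    have hD' : (b - r * a * 2 + r ^ 2) * (b - r * a * 2 + r ^ 2)⁻¹ = 1 := mul_inv_cancel₀ hD
    field_simp [hQ'.ne']
    linear_combination hD'
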